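/- arXiv:2506.08092 — 2 statements merged into one kernel-verified Lean document; each statement's English description precedes it below -/
import Mathlib

section
/- The DGBR phase-space point operators are the Hermitian parts of the KD phase-space point operators: A_{g,χ} = (1/2)(B_{g,χ} + B_{g,χ}†), where B_{g,χ} = |χ⟩⟨χ|g⟩⟨g| and A_{g,χ} = P_{g,χ} A_{0,0} P_{g,χ}† with A_{0,0} = 2^{-2n} Σ_{u·v = 0 mod 2} P_{u,v}. -/
open scoped BigOperators
open Matrix Kronecker

noncomputable section

/-- The group `G = (ℤ/2ℤ)^n` indexing the computational basis of `(ℂ²)^{⊗n}`. -/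
abbrev G (n : ℕ) : Type := Fin n → ZMod 2

/-- Mod-2 dot product. -/
def dot {n : ℕ} (u v : G n) : ZMod 2 := ∑ j, u j * v j

/-- `(-1)^x` for `x : ZMod 2`. -/
def sgn (x : ZMod 2) : ℂ := if x = 0 then 1 else -1

/-- Normalization constant `2^{-n/2}`. -/
def nrm (n : ℕ) : ℂ := ((Real.sqrt 2 ^ n : ℝ) : ℂ)⁻¹

/-- Amplitude `⟨a|χ⟩ = (-1)^{χ·a} 2^{-n/2}` of the Fourier basis state `|χ⟩`. -/
def chi {n : ℕ} (χ a : G n) : ℂ := sgn (dot χ a) * nrm n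

/-- KD phase-space point operator `B_{g,χ} = |χ⟩⟨χ|g⟩⟨g|`. -/
def B {n : ℕ} (g χ : G n) : Matrix (G n) (G n) ℂ :=
  Matrix.of fun a b => chi χ a * (starRingEnd ℂ) (chi χ g) * (if b = g then 1 else 0)

/-- Real Pauli string `P_{u,v} = ∏_j Z_j^{v_j} X_j^{u_j}`:
it maps `|b⟩` to `(-1)^{v·(b+u)} |b+u⟩`. -/
def P {n : ℕ} (u v : G n) : Matrix (G n) (G n) ℂ :=
  Matrix.of fun a b => if a = b + u then sgn (dot v a) else 0

/-- The `(ℤ/2ℤ)^n` Kirkwood–Dirac distribution `Q_{g,χ}(ρ) = Tr(B_{g,χ} ρ)`. -/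
def Q {n : ℕ} (ρ : Matrix (G n) (G n) ℂ) (g χ : G n) : ℂ := (B g χ * ρ).trace

/-! ### Auxiliary lemmas -/

lemma zmod2_cases (x : ZMod 2) : x = 0 ∨ x = 1 := by revert x; decide

lemma sgn_add (x y : ZMod 2) : sgn (x + y) = sgn x * sgn y := by
  rcases zmod2_cases x with rfl | rfl <;> rcases zmod2_cases y with rfl | rfl <;>
    simp [sgn, show ((1 : ZMod 2) + 1 = 0) from by decide]

lemma sgn_conj (x : ZMod 2) : (starRingEnd ℂ) (sgn x) = sgn x := by
  rcases zmod2_cases x with rfl | rfl <;> simp [sgn]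

lemma G_add_self {n : ℕ} (w : G n) : w + w = 0 :=
  funext fun j => (by decide : ∀ x : ZMod 2, x + x = 0) (w j)

lemma G_eq_swap {n : ℕ} (a b u : G n) : a = b + u ↔ u = a + b := by
  have key : ∀ x y z : ZMod 2, (x = y + z ↔ z = x + y) := by decide
  constructor
  · intro h; funext j; exact (key (a j) (b j) (u j)).mp (by simpa using congrFun h j)
  · intro h; funext j
    show a j = b j + u j
    exact (key (a j) (b j) (u j)).mpr (by simpa using congrFun h j)

lemma G_eq_swap' {n : ℕ} (a b u : G n) : a = b + u ↔ b = a + u := by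
  have key : ∀ x y z : ZMod 2, (x = y + z ↔ y = x + z) := by decide
  constructor
  · intro h; funext j; exact (key (a j) (b j) (u j)).mp (by simpa using congrFun h j)
  · intro h; funext j
    show a j = b j + u j
    exact (key (a j) (b j) (u j)).mpr (by simpa using congrFun h j)

lemma G_add_eq_zero {n : ℕ} (a b : G n) : a + b = 0 ↔ a = b := by
  constructor
  · intro h
    funext j
    have hj := congrFun h j
    revert hj
    exact (by decide : ∀ x y : ZMod 2, x + y = 0 → x = y) (a j) (b j)
  · rintro rfl; exact G_add_self a

lemma dot_comm {n : ℕ} (u v : G n) : dot u v = dot v u := by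
  unfold dot; exact Finset.sum_congr rfl fun j _ => mul_comm _ _

lemma dot_add_left {n : ℕ} (u w v : G n) : dot (u + w) v = dot u v + dot w v := by
  unfold dot
  rw [← Finset.sum_add_distrib]
  exact Finset.sum_congr rfl fun j _ => by simp [add_mul]

lemma dot_add_right {n : ℕ} (c v w : G n) : dot c (v + w) = dot c v + dot c w := by
  rw [dot_comm, dot_add_left, dot_comm v c, dot_comm w c]

lemma dot_single {n : ℕ} (c : G n) (j : Fin n) : dot c (Pi.single j 1) = c j := by
  unfold dot
  rw [Finset.sum_eq_single j]
  · simp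
  · intro i _ hij; simp [Pi.single_apply, hij]
  · simp

lemma sgn_add_one (x : ZMod 2) : sgn (x + 1) = -sgn x := by
  rcases zmod2_cases x with rfl | rfl <;>
    simp [sgn, show ((1 : ZMod 2) + 1 = 0) from by decide]

set_option maxHeartbeats 1000000 in
/-- The basic character sum over `(ℤ/2ℤ)^n`. -/
lemma char_sum {n : ℕ} (c : G n) :
    ∑ v : G n, sgn (dot c v) = if c = 0 then (2 : ℂ) ^ n else 0 := by
  by_cases hc : c = 0
  · subst hc
    simp only [if_pos rfl]
    have hd : ∀ v : G n, dot (0 : G n) v = 0 := by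
      intro v; unfold dot; simp
    simp only [hd]
    simp [sgn, Finset.card_univ, Fintype.card_fun]
  · rw [if_neg hc]
    obtain ⟨j, hj⟩ : ∃ j, c j ≠ 0 := by
      by_contra h
      push_neg at h
      exact hc (funext fun j => h j)
    have hj1 : c j = 1 := (zmod2_cases (c j)).resolve_left hj
    have hbij : Function.Bijective (fun v : G n => v + Pi.single j 1) := by
      constructor
      · intro x y hxy
        have := congrArg (fun z : G n => z + Pi.single j 1) hxy
        simpa [add_assoc, G_add_self] using this
      · intro y
        exact ⟨y + Pi.single j 1, by simp [add_assoc, G_add_self]⟩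
    have h1 : ∑ v : G n, sgn (dot c v) = ∑ v : G n, -sgn (dot c v) :=
      Fintype.sum_bijective (fun v : G n => v + Pi.single j 1) hbij
        (fun v => sgn (dot c v)) (fun v => -sgn (dot c v))
        (fun v => by
          show sgn (dot c v) = -sgn (dot c (v + Pi.single j 1))
          rw [dot_add_right, dot_single, hj1, sgn_add_one, neg_neg])
    have h2 : ∑ v : G n, -sgn (dot c v) = -∑ v : G n, sgn (dot c v) := by
      simp
    have h3 := h1.trans h2
    have hkey : (2 : ℂ) * ∑ v : G n, sgn (dot c v) = 0 := by linear_combination h3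
    rcases mul_eq_zero.mp hkey with h | h
    · norm_num at h
    · exact h

lemma indicator_eq (p : ZMod 2) (x : ℂ) :
    (if p = 0 then x else 0) = (x + sgn p * x) / 2 := by
  rcases zmod2_cases p with rfl | rfl <;> simp [sgn]

/-- The constrained character sum. -/
lemma Tsum {n : ℕ} (w c : G n) :
    ∑ v : G n, (if dot w v = 0 then sgn (dot v c) else 0) =
      ((if c = 0 then (2 : ℂ) ^ n else 0) + (if c = w then (2 : ℂ) ^ n else 0)) / 2 := by
  have step : ∀ v : G n,
      (if dot w v = 0 then sgn (dot v c) else 0) =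
        (sgn (dot c v) + sgn (dot (c + w) v)) / 2 := by
    intro v
    rw [indicator_eq (dot w v) (sgn (dot v c)), dot_comm v c, dot_add_left, sgn_add]
    ring
  rw [Finset.sum_congr rfl fun v _ => step v, ← Finset.sum_div, Finset.sum_add_distrib,
    char_sum c, char_sum (c + w)]
  congr 2
  by_cases h : c = w
  · rw [if_pos h, if_pos (by rw [h]; exact G_add_self w)]
  · rw [if_neg h, if_neg (fun hcw => h ((G_add_eq_zero c w).mp hcw))]

lemma P_mul_apply {n : ℕ} (g χ : G n) (M : Matrix (G n) (G n) ℂ) (a b : G n) :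
    (P g χ * M) a b = sgn (dot χ a) * M (a + g) b := by
  rw [Matrix.mul_apply]
  have h : ∀ c : G n, P g χ a c * M c b =
      if c = a + g then sgn (dot χ a) * M c b else 0 := by
    intro c
    simp only [P, Matrix.of_apply]
    simp only [show (a = c + g) = (c = a + g) from propext (G_eq_swap' a c g)]
    split_ifs <;> ring
  rw [Finset.sum_congr rfl fun c _ => h c, Finset.sum_ite_eq' Finset.univ (a + g)]
  simp

lemma mul_PH_apply {n : ℕ} (g χ : G n) (M : Matrix (G n) (G n) ℂ) (a b : G n) :
    (M * (P g χ)ᴴ) a b = M a (b + g) * sgn (dot χ b) := by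
  rw [Matrix.mul_apply]
  have h : ∀ c : G n, M a c * (P g χ)ᴴ c b =
      if c = b + g then M a c * sgn (dot χ b) else 0 := by
    intro c
    simp only [Matrix.conjTranspose_apply, P, Matrix.of_apply]
    simp only [show (b = c + g) = (c = b + g) from propext (G_eq_swap' b c g)]
    split_ifs <;> simp [sgn_conj]
  rw [Finset.sum_congr rfl fun c _ => h c, Finset.sum_ite_eq' Finset.univ (b + g)]
  simp

lemma S_apply {n : ℕ} (a b : G n) :
    (∑ u : G n, ∑ v : G n, if dot u v = 0 then P u v else 0) a b =
      ∑ v : G n, if dot (a + b) v = 0 then sgn (dot v a) else 0 := by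
  simp only [Matrix.sum_apply]
  rw [Finset.sum_comm]
  refine Finset.sum_congr rfl fun v _ => ?_
  have h : ∀ u : G n, (if dot u v = 0 then P u v else 0) a b =
      if u = a + b then (if dot u v = 0 then sgn (dot v a) else 0) else 0 := by
    intro u
    rw [apply_ite (fun M : Matrix (G n) (G n) ℂ => M a b)]
    simp only [P, Matrix.of_apply, Matrix.zero_apply]
    simp only [show (a = b + u) = (u = a + b) from propext (G_eq_swap a b u)]
    split_ifs <;> rfl
  rw [Finset.sum_congr rfl fun u _ => h u, Finset.sum_ite_eq' Finset.univ (a + b)]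
  simp

lemma nrm_sq (n : ℕ) : nrm n * nrm n = ((2 : ℂ) ^ n)⁻¹ := by
  unfold nrm
  rw [← mul_inv, ← Complex.ofReal_mul, ← mul_pow,
    Real.mul_self_sqrt (by norm_num : (0:ℝ) ≤ 2)]
  push_cast
  rfl

/-- the DGBR phase-space point operators
`A_{g,chi} = P_{g,chi} A_{0,0} P_{g,chi}^dagger`, with
`A_{0,0} = 2^(-2n) * sum over u.v = 0 of P_{u,v}`, are the Hermitian parts of the
KD phase-space point operators `B_{g,chi}`. -/
theorem dgbr_eq_hermitian_part_of_kd (n : ℕ) (g χ : G n) :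
    P g χ *
      (((2 : ℂ) ^ (2 * n))⁻¹ •
        ∑ u : G n, ∑ v : G n, if dot u v = 0 then P u v else 0) *
      (P g χ)ᴴ =
    (1 / 2 : ℂ) • (B g χ + (B g χ)ᴴ) := by
  ext a b
  rw [mul_PH_apply, P_mul_apply, Matrix.smul_apply, S_apply]
  have hsum : (a + g) + (b + g) = a + b := by
    have : (a + g) + (b + g) = (a + b) + (g + g) := by abel
    rw [this, G_add_self, add_zero]
  rw [hsum, Tsum]
  -- simplify the conditions
  have hag : ((a + g : G n) = 0) = (a = g) := propext (G_add_eq_zero a g)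
  have hbg : ((a + g : G n) = a + b) = (b = g) := by
    apply propext
    constructor
    · intro h; exact (add_left_cancel h).symm
    · rintro rfl; rfl
  simp only [hag, hbg]
  -- right-hand side
  have hconj : (starRingEnd ℂ) (nrm n) = nrm n := by
    simp [nrm, Complex.conj_ofReal]
  simp only [Matrix.smul_apply, Matrix.add_apply, Matrix.conjTranspose_apply, B,
    Matrix.of_apply, chi, Complex.star_def, _root_.map_mul, sgn_conj, Complex.conj_conj,
    hconj, apply_ite (starRingEnd ℂ), _root_.map_one, map_zero, smul_eq_mul]
  have hN : (2 : ℂ) ^ n ≠ 0 := pow_ne_zero _ two_ne_zero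
  have hs : ((2 : ℂ) ^ (2 * n))⁻¹ = ((2 : ℂ) ^ n)⁻¹ * ((2 : ℂ) ^ n)⁻¹ := by
    rw [two_mul, pow_add, mul_inv]
  have hnrm := nrm_sq n
  have hinv : (2 : ℂ) ^ n * ((2 : ℂ) ^ n)⁻¹ = 1 := mul_inv_cancel₀ hN
  by_cases ha : a = g <;> by_cases hb : b = g
  · have h1 : sgn (dot χ g) = sgn (dot χ a) := by rw [ha]
    have h2 : sgn (dot χ b) = sgn (dot χ a) := by rw [ha, hb]
    simp only [if_pos ha, if_pos hb, h1, h2]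
    linear_combination (sgn (dot χ a) ^ 2 * (2:ℂ)^n) * hs -
      sgn (dot χ a) ^ 2 * hnrm + (sgn (dot χ a) ^ 2 * ((2:ℂ)^n)⁻¹) * hinv
  · have h1 : sgn (dot χ g) = sgn (dot χ a) := by rw [ha]
    simp only [if_pos ha, if_neg hb, h1]
    linear_combination (sgn (dot χ a) * sgn (dot χ b) * (2:ℂ)^n / 2) * hs -
      (sgn (dot χ a) * sgn (dot χ b) / 2) * hnrm +
      (sgn (dot χ a) * sgn (dot χ b) * ((2:ℂ)^n)⁻¹ / 2) * hinv
  · have h1 : sgn (dot χ g) = sgn (dot χ b) := by rw [hb]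
    simp only [if_pos hb, if_neg ha, h1]
    linear_combination (sgn (dot χ a) * sgn (dot χ b) * (2:ℂ)^n / 2) * hs -
      (sgn (dot χ a) * sgn (dot χ b) / 2) * hnrm +
      (sgn (dot χ a) * sgn (dot χ b) * ((2:ℂ)^n)⁻¹ / 2) * hinv
  · simp only [if_neg ha, if_neg hb]
    ring
end
end

section
/- CNOT covariance of the KD distribution: Q_{g,χ}(CX_{ct} ρ CX_{ct}†) = Q_{A_{ct}g, B_{ct}χ}(ρ), where (A_{ct})_{jk} = δ_{jk} + δ_{tj}δ_{ck} and (B_{ct})_{jk} = δ_{jk} + δ_{cj}δ_{tk} act linearly on (Z/2Z)^n. -/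
open scoped BigOperators
open Matrix Kronecker

noncomputable section

/-- Action of CNOT on computational-basis labels: `(A_{ct} g)_j = g_j + delta_{tj} g_c`. -/
def Amap {n : ℕ} (c t : Fin n) (g : G n) : G n :=
  fun j => g j + if j = t then g c else 0

/-- Action of CNOT on Fourier-basis labels: `(B_{ct} chi)_j = chi_j + delta_{cj} chi_t`. -/
def Bmap {n : ℕ} (c t : Fin n) (χ : G n) : G n :=
  fun j => χ j + if j = c then χ t else 0

/-- The CNOT gate with control c and target t: it maps `|b>` to `|A_{ct} b>`. -/
def CX {n : ℕ} (c t : Fin n) : Matrix (G n) (G n) ℂ :=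
  Matrix.of fun a b => if a = Amap c t b then 1 else 0


lemma Amap_invol {n : ℕ} (c t : Fin n) (hct : c ≠ t) (b : G n) :
    Amap c t (Amap c t b) = b := by
  funext j
  simp only [Amap]
  by_cases hj : j = t
  · subst hj
    simp [hct]
    have : ∀ x : ZMod 2, x + x = 0 := by decide
    rw [add_assoc, this, add_zero]
  · simp [hj]

lemma dot_Amap {n : ℕ} (c t : Fin n) (χ a : G n) :
    dot χ (Amap c t a) = dot (Bmap c t χ) a := by
  simp only [dot, Amap, Bmap, mul_add, add_mul]
  rw [Finset.sum_add_distrib, Finset.sum_add_distrib]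
  congr 1
  simp [mul_ite, ite_mul, mul_comm]

lemma chi_Amap {n : ℕ} (c t : Fin n) (χ a : G n) :
    chi χ (Amap c t a) = chi (Bmap c t χ) a := by
  simp [chi, dot_Amap]

lemma Q_eq {n : ℕ} (ρ : Matrix (G n) (G n) ℂ) (g χ : G n) :
    Q ρ g χ = ∑ a, chi χ a * (starRingEnd ℂ) (chi χ g) * ρ g a := by
  simp [Q, Matrix.trace, Matrix.mul_apply, B, Matrix.diag, ite_mul, mul_assoc]

lemma CX_entry {n : ℕ} (c t : Fin n) (hct : c ≠ t) (ρ : Matrix (G n) (G n) ℂ) (g a : G n) :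
    (CX c t * ρ * (CX c t)ᴴ) g a = ρ (Amap c t g) (Amap c t a) := by
  have hcond : ∀ x b : G n, (x = Amap c t b) ↔ (b = Amap c t x) := by
    intro x b
    constructor <;> intro h <;> rw [h, Amap_invol c t hct]
  simp only [Matrix.mul_apply, Matrix.conjTranspose_apply, CX, Matrix.of_apply]
  have h1 : ∀ x : G n, (a = Amap c t x) = (x = Amap c t a) := fun x => propext (hcond a x)
  have h2 : ∀ x : G n, (g = Amap c t x) = (x = Amap c t g) := fun x => propext (hcond g x)
  simp only [apply_ite, star_one, star_zero, ite_mul, mul_ite, one_mul, mul_one,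
    zero_mul, mul_zero, h1, h2, Finset.sum_ite_eq, Finset.sum_ite_eq', Finset.mem_univ, if_true]

/-- CNOT covariance of the KD distribution. -/
theorem kd_cnot_covariance {n : ℕ} (c t : Fin n) (hct : c ≠ t)
    (ρ : Matrix (G n) (G n) ℂ) (g χ : G n) :
    Q (CX c t * ρ * (CX c t)ᴴ) g χ = Q ρ (Amap c t g) (Bmap c t χ) := by
  rw [Q_eq, Q_eq]
  rw [← Equiv.sum_comp
    (⟨Amap c t, Amap c t, Amap_invol c t hct, Amap_invol c t hct⟩ : G n ≃ G n)
    (fun a => chi χ a * (starRingEnd ℂ) (chi χ g) * (CX c t * ρ * (CX c t)ᴴ) g a)]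
  apply Finset.sum_congr rfl
  intro a _
  show chi χ (Amap c t a) * (starRingEnd ℂ) (chi χ g) * (CX c t * ρ * (CX c t)ᴴ) g (Amap c t a)
      = chi (Bmap c t χ) a * (starRingEnd ℂ) (chi (Bmap c t χ) (Amap c t g)) * ρ (Amap c t g) a
  rw [CX_entry c t hct, Amap_invol c t hct, chi_Amap]
  congr 2
  rw [← chi_Amap, Amap_invol c t hct]
end
end
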